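/- If A is coninvolutory and (u, v, σ) is a singular triplet of A, then (conj(v), conj(u), 1/σ) is also a singular triplet of A. -/

import Mathlib

lemma conj_mulVec_aux {n : ℕ} (M : Matrix (Fin n) (Fin n) ℂ) (x : Fin n → ℂ) :
    (M.map (starRingEnd ℂ)).mulVec (fun i => starRingEnd ℂ (x i)) =
      fun i => starRingEnd ℂ (M.mulVec x i) := by
  funext i
  simp [Matrix.mulVec, dotProduct, map_sum]

/-- If `A` is coninvolutory and `(u, v, σ)` is a singular triplet of `A`, then
`(conj v, conj u, 1/σ)` is also a singular triplet of `A`. -/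
theorem coninvolutory_singular_triplet_pair {n : ℕ} (A : Matrix (Fin n) (Fin n) ℂ)
    (hA : A * A.map (starRingEnd ℂ) = 1) (u v : Fin n → ℂ) (σ : ℝ) (hσ : 0 < σ)
    (hu : dotProduct (star u) u = 1) (hv : dotProduct (star v) v = 1)
    (h1 : A.mulVec v = (σ : ℂ) • u) (h2 : A.conjTranspose.mulVec u = (σ : ℂ) • v) :
    A.mulVec (fun i => starRingEnd ℂ (u i)) = ((σ⁻¹ : ℝ) : ℂ) • (fun i => starRingEnd ℂ (v i)) ∧
    A.conjTranspose.mulVec (fun i => starRingEnd ℂ (v i)) =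
      ((σ⁻¹ : ℝ) : ℂ) • (fun i => starRingEnd ℂ (u i)) := by
  set B := A.map (starRingEnd ℂ) with hB
  have hσ0 : (σ : ℂ) ≠ 0 := by exact_mod_cast hσ.ne'
  have hBA : B * A = 1 := mul_eq_one_comm.mp hA
  -- conjTranspose A = Bᵀ
  have hCT : A.conjTranspose = B.transpose := by
    ext i j; simp [hB, Matrix.conjTranspose_apply, Matrix.map_apply]
  -- conj of h1 : B.mulVec (conj v) = σ • conj u
  have h1c : B.mulVec (fun i => starRingEnd ℂ (v i)) = (σ : ℂ) • (fun i => starRingEnd ℂ (u i)) := by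
    rw [hB, conj_mulVec_aux, h1]
    funext i
    simp
  constructor
  · -- apply A to h1c
    have key : (A * B).mulVec (fun i => starRingEnd ℂ (v i)) =
        (σ : ℂ) • A.mulVec (fun i => starRingEnd ℂ (u i)) := by
      rw [← Matrix.mulVec_mulVec, h1c, Matrix.mulVec_smul]
    rw [hA, Matrix.one_mulVec] at key
    have := congrArg (fun w => ((σ : ℂ)⁻¹) • w) key
    simp only [smul_smul, inv_mul_cancel₀ hσ0, one_smul] at this
    rw [← this]
    norm_cast
  · -- Aᵀ * Bᵀ = 1
    have hTT : A.transpose * B.transpose = 1 := by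
      rw [← Matrix.transpose_mul, hBA, Matrix.transpose_one]
    have h2' : B.transpose.mulVec u = (σ : ℂ) • v := by rw [← hCT]; exact h2
    have key : (A.transpose * B.transpose).mulVec u = (σ : ℂ) • A.transpose.mulVec v := by
      rw [← Matrix.mulVec_mulVec, h2', Matrix.mulVec_smul]
    rw [hTT, Matrix.one_mulVec] at key
    have hAtv : A.transpose.mulVec v = ((σ : ℂ)⁻¹) • u := by
      have := congrArg (fun w => ((σ : ℂ)⁻¹) • w) key
      simp only [smul_smul, inv_mul_cancel₀ hσ0, one_smul] at this
      rw [← this]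
    -- conjugate: Bᵀ.mulVec (conj v) = σ⁻¹ • conj u
    have hBtmap : B.transpose = (A.transpose).map (starRingEnd ℂ) := by
      ext i j; simp [hB, Matrix.map_apply]
    rw [hCT, hBtmap, conj_mulVec_aux, hAtv]
    funext i
    simp
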